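/- For the viscous MG multiplier symbols, there exists a constant C depending only on N and ε_ν > 0 such that for all k ∈ ℤ³ with k₃ ≠ 0 and for each j ∈ {1,2,3}, |M̂ⱼ(k)| ≤ C |k|⁻². -/

import Mathlib

noncomputable section

/-- `|k|² = k₁² + k₂² + k₃²` as a real number. -/
def normSq (k1 k2 k3 : ℤ) : ℝ := (k1 : ℝ) ^ 2 + (k2 : ℝ) ^ 2 + (k3 : ℝ) ^ 2

/-- Denominator `D(k) = N⁴|k|²k₃² + (ε_ν|k|⁴ + k₂²)²`. -/
def Dsym (N εν : ℝ) (k1 k2 k3 : ℤ) : ℝ :=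
  N ^ 4 * normSq k1 k2 k3 * (k3 : ℝ) ^ 2 + (εν * (normSq k1 k2 k3) ^ 2 + (k2 : ℝ) ^ 2) ^ 2

/-- `M̂₁(k)`. -/
def Msym1 (N εν : ℝ) (k1 k2 k3 : ℤ) : ℝ :=
  (N ^ 4 * (k2 : ℝ) * (k3 : ℝ) * normSq k1 k2 k3 -
    N ^ 2 * (k1 : ℝ) * (k3 : ℝ) * ((k2 : ℝ) ^ 2 + εν * (normSq k1 k2 k3) ^ 2)) /
    Dsym N εν k1 k2 k3

/-- `M̂₂(k)`. -/
def Msym2 (N εν : ℝ) (k1 k2 k3 : ℤ) : ℝ :=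
  (-(N ^ 4) * (k1 : ℝ) * (k3 : ℝ) * normSq k1 k2 k3 -
    N ^ 2 * (k2 : ℝ) * (k3 : ℝ) * ((k2 : ℝ) ^ 2 + εν * (normSq k1 k2 k3) ^ 2)) /
    Dsym N εν k1 k2 k3

/-- `M̂₃(k)`. -/
def Msym3 (N εν : ℝ) (k1 k2 k3 : ℤ) : ℝ :=
  (N ^ 2 * ((k1 : ℝ) ^ 2 + (k2 : ℝ) ^ 2) * ((k2 : ℝ) ^ 2 + εν * (normSq k1 k2 k3) ^ 2)) /
    Dsym N εν k1 k2 k3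

/-- Key polynomial inequality for the numerators of `M̂₁`, `M̂₂`. -/
lemma key_ineq (N εν a b c s B : ℝ) (hN : 0 < N) (hεν : 0 < εν)
    (hb : 0 ≤ b) (hc : 0 ≤ c)
    (h1 : b ^ 2 ≤ s) (h2 : a * c ≤ s) (hB : εν * s ^ 2 ≤ B) (hB0 : 0 ≤ B)
    (hs0 : 0 ≤ s) :
    εν * ((N ^ 4 * b * c * s + N ^ 2 * a * c * B) * s) ≤
      2 * N ^ 2 * (N ^ 4 * s * c ^ 2 + B ^ 2) := by
  have hN2 : (0:ℝ) < N ^ 2 := by positivity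
  have t1 : εν * (N ^ 4 * b * c * s) * s ≤ N ^ 4 * (b * c) * B := by
    have := mul_le_mul_of_nonneg_left hB (show (0:ℝ) ≤ N ^ 4 * (b * c) by positivity)
    nlinarith
  have t2 : 2 * (N ^ 2 * (b * c)) * B ≤ (N ^ 2 * (b * c)) ^ 2 + B ^ 2 :=
    two_mul_le_add_sq _ _
  have t3 : N ^ 4 * b ^ 2 * c ^ 2 ≤ N ^ 4 * s * c ^ 2 := by
    nlinarith [mul_le_mul_of_nonneg_left h1 (show (0:ℝ) ≤ N ^ 4 * c ^ 2 by positivity)]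
  have t4a : εν * s ^ 2 * B ≤ B ^ 2 := by nlinarith
  have t4b : a * c * (εν * s * B) ≤ s * (εν * s * B) :=
    mul_le_mul_of_nonneg_right h2 (by positivity)
  nlinarith [mul_le_mul_of_nonneg_left t2 hN2.le, mul_le_mul_of_nonneg_left t4a hN2.le,
    mul_le_mul_of_nonneg_left t4b hN2.le, mul_le_mul_of_nonneg_left t3 hN2.le,
    mul_nonneg hN2.le (sq_nonneg B)]

/-- From `|num| * s ≤ C * D` conclude `|num / D| ≤ C / s`. -/
lemma div_bound (num D s C : ℝ) (hD : 0 < D) (hs : 0 < s) (h : |num| * s ≤ C * D) :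
    |num / D| ≤ C / s := by
  rw [abs_div, abs_of_pos hD, div_le_div_iff₀ hD hs]
  exact h

set_option maxHeartbeats 1600000 in
theorem stmt1 (N εν : ℝ) (hN : 0 < N) (hεν : 0 < εν) :
    ∃ C : ℝ, 0 < C ∧ ∀ k1 k2 k3 : ℤ, k3 ≠ 0 →
      |Msym1 N εν k1 k2 k3| ≤ C / normSq k1 k2 k3 ∧
      |Msym2 N εν k1 k2 k3| ≤ C / normSq k1 k2 k3 ∧
      |Msym3 N εν k1 k2 k3| ≤ C / normSq k1 k2 k3 := by
  refine ⟨2 * N ^ 2 / εν, by positivity, ?_⟩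
  intro k1 k2 k3 hk3
  have hc1 : (1:ℝ) ≤ |(k3:ℝ)| := by
    have := Int.one_le_abs hk3
    calc (1:ℝ) ≤ ((|k3| : ℤ) : ℝ) := by exact_mod_cast this
    _ = |(k3:ℝ)| := by push_cast; ring
  set s : ℝ := normSq k1 k2 k3 with hs
  have hsdef : s = (k1:ℝ) ^ 2 + (k2:ℝ) ^ 2 + (k3:ℝ) ^ 2 := rfl
  have hk3sq : (1:ℝ) ≤ (k3:ℝ) ^ 2 := by nlinarith [sq_abs ((k3:ℝ)), abs_nonneg ((k3:ℝ))]
  have hs1 : (1:ℝ) ≤ s := by nlinarith [sq_nonneg ((k1:ℝ)), sq_nonneg ((k2:ℝ))]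
  have hspos : (0:ℝ) < s := by linarith
  set B : ℝ := (k2:ℝ) ^ 2 + εν * s ^ 2 with hBdef
  have hB : εν * s ^ 2 ≤ B := by nlinarith [sq_nonneg ((k2:ℝ))]
  have hB0 : (0:ℝ) < B := by
    have h : (0:ℝ) < εν * s ^ 2 := by positivity
    nlinarith [sq_nonneg ((k2:ℝ))]
  have hDeq : Dsym N εν k1 k2 k3 = N ^ 4 * s * (k3:ℝ) ^ 2 + B ^ 2 := by
    rw [Dsym, ← hs, hBdef]; ring
  have hDpos : 0 < Dsym N εν k1 k2 k3 := by rw [hDeq]; positivity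
  clear_value s B
  -- generic numerator bound
  have main : ∀ x y : ℝ, |x| * |(k3:ℝ)| ≤ s → |y| ^ 2 ≤ s →
      |N ^ 4 * y * (k3:ℝ) * s - N ^ 2 * x * (k3:ℝ) * B| * s ≤
        2 * N ^ 2 / εν * Dsym N εν k1 k2 k3 := by
    intro x y hx hy
    have habs : |N ^ 4 * y * (k3:ℝ) * s - N ^ 2 * x * (k3:ℝ) * B| ≤
        N ^ 4 * |y| * |(k3:ℝ)| * s + N ^ 2 * |x| * |(k3:ℝ)| * B := by
      calc |N ^ 4 * y * (k3:ℝ) * s - N ^ 2 * x * (k3:ℝ) * B|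
          ≤ |N ^ 4 * y * (k3:ℝ) * s| + |N ^ 2 * x * (k3:ℝ) * B| := abs_sub _ _
        _ = N ^ 4 * |y| * |(k3:ℝ)| * s + N ^ 2 * |x| * |(k3:ℝ)| * B := by
            rw [abs_mul, abs_mul, abs_mul, abs_mul, abs_mul, abs_mul,
              abs_of_pos (pow_pos hN 4), abs_of_pos (pow_pos hN 2),
              abs_of_pos hspos, abs_of_pos hB0]
    have hkey := key_ineq N εν |x| |y| |(k3:ℝ)| s B hN hεν
      (abs_nonneg _) (abs_nonneg _) hy hx hB hB0.le hspos.le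
    rw [sq_abs] at hkey
    rw [hDeq, div_mul_eq_mul_div, le_div_iff₀ hεν]
    calc |N ^ 4 * y * (k3:ℝ) * s - N ^ 2 * x * (k3:ℝ) * B| * s * εν
        ≤ (N ^ 4 * |y| * |(k3:ℝ)| * s + N ^ 2 * |x| * |(k3:ℝ)| * B) * s * εν := by
          gcongr
      _ ≤ 2 * N ^ 2 * (N ^ 4 * s * (k3:ℝ) ^ 2 + B ^ 2) := by nlinarith [hkey]
  have hx1 : |(k1:ℝ)| * |(k3:ℝ)| ≤ s := by
    nlinarith [sq_abs ((k1:ℝ)), sq_abs ((k3:ℝ)), sq_nonneg (|(k1:ℝ)| - |(k3:ℝ)|),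
      sq_nonneg ((k2:ℝ)), abs_nonneg ((k1:ℝ)), abs_nonneg ((k3:ℝ))]
  have hx2 : |(k2:ℝ)| * |(k3:ℝ)| ≤ s := by
    nlinarith [sq_abs ((k2:ℝ)), sq_abs ((k3:ℝ)), sq_nonneg (|(k2:ℝ)| - |(k3:ℝ)|),
      sq_nonneg ((k1:ℝ)), abs_nonneg ((k2:ℝ)), abs_nonneg ((k3:ℝ))]
  have hy1 : |(k2:ℝ)| ^ 2 ≤ s := by
    rw [sq_abs]; nlinarith [sq_nonneg ((k1:ℝ)), sq_nonneg ((k3:ℝ))]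
  have hy2 : |(-(k1:ℝ))| ^ 2 ≤ s := by
    rw [abs_neg, sq_abs]; nlinarith [sq_nonneg ((k2:ℝ)), sq_nonneg ((k3:ℝ))]
  refine ⟨?_, ?_, ?_⟩
  · have heq : Msym1 N εν k1 k2 k3 =
        (N ^ 4 * (k2:ℝ) * (k3:ℝ) * s - N ^ 2 * (k1:ℝ) * (k3:ℝ) * B) / Dsym N εν k1 k2 k3 := by
      rw [Msym1, ← hs, hBdef]
    rw [heq]
    exact div_bound _ _ _ _ hDpos hspos (main _ _ hx1 hy1)
  · have heq : Msym2 N εν k1 k2 k3 =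
        (N ^ 4 * (-(k1:ℝ)) * (k3:ℝ) * s - N ^ 2 * (k2:ℝ) * (k3:ℝ) * B) / Dsym N εν k1 k2 k3 := by
      rw [Msym2, ← hs, hBdef]; ring_nf
    rw [heq]
    exact div_bound _ _ _ _ hDpos hspos (main _ _ hx2 hy2)
  · have hnum : (0:ℝ) ≤ N ^ 2 * ((k1:ℝ) ^ 2 + (k2:ℝ) ^ 2) * B := by positivity
    have heq : Msym3 N εν k1 k2 k3 =
        (N ^ 2 * ((k1:ℝ) ^ 2 + (k2:ℝ) ^ 2) * B) / Dsym N εν k1 k2 k3 := by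
      rw [Msym3, ← hs, hBdef]
    rw [heq]
    refine div_bound _ _ _ _ hDpos hspos ?_
    rw [abs_of_nonneg hnum, hDeq, div_mul_eq_mul_div, le_div_iff₀ hεν]
    have hN2 : (0:ℝ) < N ^ 2 := by positivity
    have h12 : (k1:ℝ) ^ 2 + (k2:ℝ) ^ 2 ≤ s := by rw [hsdef]; nlinarith [sq_nonneg ((k3:ℝ))]
    have t : ((k1:ℝ) ^ 2 + (k2:ℝ) ^ 2) * (B * s * εν) ≤ s * (B * s * εν) :=
      mul_le_mul_of_nonneg_right h12 (by positivity)
    have t2 : εν * s ^ 2 * B ≤ B ^ 2 := by nlinarith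
    nlinarith [mul_le_mul_of_nonneg_left t hN2.le, mul_le_mul_of_nonneg_left t2 hN2.le,
      mul_nonneg (mul_nonneg (pow_pos hN 4).le hspos.le) (sq_nonneg ((k3:ℝ))),
      mul_nonneg hN2.le (sq_nonneg B)]
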